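/- arXiv:1807.08078 — 3 statements merged into one kernel-verified Lean document; each statement's English description precedes it below -/
import Mathlib

section
/- Let G=(V,E) be a general dissimilarity graph containing at least one unbalanced cycle, so that δ(G)>0, and fix an arbitrary orientation (α,β) for each edge of E. Fix an edge e=(s,t), and let X = { f=(α,β)∈E : w(f) = d(α,s) + w(e) + d(t,β) + δ(G) } and Y = { f=(α,β)∈E : w(f) = d(β,s) + w(e) + d(t,α) + δ(G) }. Then N_U(e,δ(G)) = Σ_{(α,β)∈X} csp(α,s)·csp(t,β) + Σ_{(α,β)∈Y} csp(β,s)·csp(t,α). -/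
open SimpleGraph

noncomputable section

variable {V : Type*}

/-- The length of a walk: the sum of the weights of its edges. -/
def wlen {G : SimpleGraph V} (w : Sym2 V → ℝ) {u v : V} (p : G.Walk u v) : ℝ :=
  (p.edges.map w).sum

/-- The shortest-path distance between two vertices: the minimum length of a path. -/
def spDist (G : SimpleGraph V) (w : Sym2 V → ℝ) (u v : V) : ℝ :=
  sInf {x : ℝ | ∃ p : G.Walk u v, p.IsPath ∧ wlen w p = x}

/-- The number of distinct shortest paths from `u` to `v`. -/
def csp (G : SimpleGraph V) (w : Sym2 V → ℝ) (u v : V) : ℕ :=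
  Nat.card {p : G.Walk u v // p.IsPath ∧ wlen w p = spDist G w u v}

/-- `c` is the edge set of some cycle of `G`.  (A cycle is determined, up to
rotation and reflection, by its edge set.) -/
def IsCycleSet [DecidableEq V] (G : SimpleGraph V) (c : Finset (Sym2 V)) : Prop :=
  ∃ (v : V) (p : G.Walk v v), p.IsCycle ∧ p.edges.toFinset = c

/-- `e` is a top edge of the cycle with edge set `c`: it lies in `c` and its
weight strictly exceeds the sum of the weights of all the other edges of `c`. -/
def TopOfSet [DecidableEq V] (w : Sym2 V → ℝ) (c : Finset (Sym2 V)) (e : Sym2 V) : Prop :=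
  e ∈ c ∧ ∑ f ∈ c.erase e, w f < w e

/-- A cycle is unbalanced if it has a top edge. -/
def UnbalancedSet [DecidableEq V] (w : Sym2 V → ℝ) (c : Finset (Sym2 V)) : Prop :=
  ∃ e, TopOfSet w c e

/-- `S` contains at least one edge of every unbalanced cycle. -/
def RegularCoverSet [DecidableEq V] (G : SimpleGraph V) (w : Sym2 V → ℝ)
    (S : Set (Sym2 V)) : Prop :=
  ∀ c : Finset (Sym2 V), IsCycleSet G c → UnbalancedSet w c → ∃ e ∈ c, e ∈ S

/-- `S` contains at least one non-top edge of every unbalanced cycle. -/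
def NonTopCoverSet [DecidableEq V] (G : SimpleGraph V) (w : Sym2 V → ℝ)
    (S : Set (Sym2 V)) : Prop :=
  ∀ c : Finset (Sym2 V), IsCycleSet G c → UnbalancedSet w c →
    ∃ e ∈ c, e ∈ S ∧ ¬ TopOfSet w c e

/-- The deficit of a cycle with edge set `c`: the largest edge weight minus the
sum of the weights of all the other edges. -/
def deficitSet (w : Sym2 V → ℝ) (c : Finset (Sym2 V)) : ℝ :=
  2 * sSup (w '' (c : Set (Sym2 V))) - ∑ f ∈ c, w f

/-- `δ(G)`: the maximum deficit over all cycles of `G`. -/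
def deltaG [DecidableEq V] (G : SimpleGraph V) (w : Sym2 V → ℝ) : ℝ :=
  sSup {x : ℝ | ∃ c : Finset (Sym2 V), IsCycleSet G c ∧ deficitSet w c = x}

/-- `N_T(e, a)`: the number of distinct unbalanced cycles of deficit `a`
whose top edge is `e`. -/
def NT [DecidableEq V] (G : SimpleGraph V) (w : Sym2 V → ℝ) (e : Sym2 V) (a : ℝ) : ℕ :=
  Nat.card {c : Finset (Sym2 V) // IsCycleSet G c ∧ TopOfSet w c e ∧ deficitSet w c = a}

/-- `N_U(e, a)`: the number of distinct unbalanced cycles of deficit `a`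
containing `e` as a non-top edge. -/
def NU [DecidableEq V] (G : SimpleGraph V) (w : Sym2 V → ℝ) (e : Sym2 V) (a : ℝ) : ℕ :=
  Nat.card {c : Finset (Sym2 V) // IsCycleSet G c ∧ UnbalancedSet w c ∧
    e ∈ c ∧ ¬ TopOfSet w c e ∧ deficitSet w c = a}

section MyAuxSection

section WalkAux

variable {G : SimpleGraph V} {w : Sym2 V → ℝ}

@[simp] lemma wlen_nil {u : V} : wlen w (Walk.nil : G.Walk u u) = 0 := by simp [wlen]

@[simp] lemma wlen_cons {u v x : V} (h : G.Adj u v) (p : G.Walk v x) :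
    wlen w (Walk.cons h p) = w s(u, v) + wlen w p := by simp [wlen]

@[simp] lemma wlen_append {u v x : V} (p : G.Walk u v) (q : G.Walk v x) :
    wlen w (p.append q) = wlen w p + wlen w q := by simp [wlen]

@[simp] lemma wlen_reverse {u v : V} (p : G.Walk u v) :
    wlen w p.reverse = wlen w p := by
  simp [wlen, Walk.edges_reverse, List.map_reverse, List.sum_reverse]

lemma wlen_nonneg (hw : ∀ e ∈ G.edgeSet, 0 < w e) {u v : V} (p : G.Walk u v) :
    0 ≤ wlen w p := by
  apply List.sum_nonneg
  intro x hx
  obtain ⟨f, hf, rfl⟩ := List.mem_map.mp hx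
  exact (hw f (p.edges_subset_edgeSet hf)).le

lemma weight_le_wlen (hw : ∀ e ∈ G.edgeSet, 0 < w e) {u v : V} {p : G.Walk u v}
    {f : Sym2 V} (hf : f ∈ p.edges) : w f ≤ wlen w p := by
  classical
  induction p with
  | nil => simp at hf
  | cons h q ih =>
    rw [Walk.edges_cons, List.mem_cons] at hf
    rw [wlen_cons]
    rcases hf with rfl | hf
    · have := wlen_nonneg hw q; linarith
    · have h1 := ih hf
      have h2 : 0 ≤ w s(_, _) := (hw _ (G.mem_edgeSet.mpr h)).le
      linarith

lemma trail_sum_eq [DecidableEq V] {u v : V} {p : G.Walk u v} (ht : p.IsTrail) :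
    ∑ f ∈ p.edges.toFinset, w f = wlen w p := by
  rw [wlen, ← List.sum_toFinset _ ht.edges_nodup]

lemma sum_toFinset_le [DecidableEq V] {l : List (Sym2 V)}
    (h : ∀ x ∈ l, 0 ≤ w x) : ∑ x ∈ l.toFinset, w x ≤ (l.map w).sum := by
  induction l with
  | nil => simp
  | cons a l ih =>
    simp only [List.toFinset_cons, List.map_cons, List.sum_cons]
    have h' : ∀ x ∈ l, 0 ≤ w x := fun x hx => h x (List.mem_cons_of_mem _ hx)
    by_cases ha : a ∈ l.toFinset
    · rw [Finset.insert_eq_self.mpr ha]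
      have ha0 : 0 ≤ w a := h a List.mem_cons_self
      linarith [ih h']
    · rw [Finset.sum_insert ha]
      linarith [ih h']

end WalkAux

section SPAux

variable [Fintype V] [DecidableEq V] {G : SimpleGraph V} [DecidableRel G.Adj] {w : Sym2 V → ℝ}

lemma spSet_finite (u v : V) :
    {x : ℝ | ∃ p : G.Walk u v, p.IsPath ∧ wlen w p = x}.Finite := by
  have h : {x : ℝ | ∃ p : G.Walk u v, p.IsPath ∧ wlen w p = x}
      = Set.range (fun p : G.Path u v => wlen w p.1) := by
    ext x
    constructor
    · rintro ⟨p, hp, rfl⟩; exact ⟨⟨p, hp⟩, rfl⟩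
    · rintro ⟨⟨p, hp⟩, rfl⟩; exact ⟨p, hp, rfl⟩
  rw [h]
  exact Set.finite_range _

lemma spDist_le_path {u v : V} {p : G.Walk u v} (hp : p.IsPath) :
    spDist G w u v ≤ wlen w p :=
  csInf_le (spSet_finite u v).bddBelow ⟨p, hp, rfl⟩

lemma exists_shortest (hconn : G.Connected) (u v : V) :
    ∃ p : G.Walk u v, p.IsPath ∧ wlen w p = spDist G w u v := by
  have hne : {x : ℝ | ∃ p : G.Walk u v, p.IsPath ∧ wlen w p = x}.Nonempty := by
    obtain ⟨q⟩ := hconn.preconnected u v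
    exact ⟨wlen w q.bypass, q.bypass, q.bypass_isPath, rfl⟩
  exact hne.csInf_mem (spSet_finite u v)

lemma spDist_le_walk (hw : ∀ e ∈ G.edgeSet, 0 < w e) {u v : V} (p : G.Walk u v) :
    spDist G w u v ≤ wlen w p := by
  refine le_trans (spDist_le_path p.bypass_isPath) ?_
  rw [← trail_sum_eq p.bypass_isPath.isTrail]
  calc ∑ f ∈ p.bypass.edges.toFinset, w f
      ≤ ∑ f ∈ p.edges.toFinset, w f := by
        apply Finset.sum_le_sum_of_subset_of_nonneg
        · intro x hx
          rw [List.mem_toFinset] at hx ⊢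
          exact p.edges_bypass_subset hx
        · intro x hx _
          rw [List.mem_toFinset] at hx
          exact (hw x (p.edges_subset_edgeSet hx)).le
    _ ≤ (p.edges.map w).sum :=
        sum_toFinset_le (fun x hx => (hw x (p.edges_subset_edgeSet hx)).le)
    _ = wlen w p := rfl

lemma spDist_nonneg (hw : ∀ e ∈ G.edgeSet, 0 < w e) (hconn : G.Connected) (u v : V) :
    0 ≤ spDist G w u v := by
  obtain ⟨p, hp, hl⟩ := exists_shortest (w := w) hconn u v
  rw [← hl]
  exact wlen_nonneg hw p

end SPAux

set_option linter.unusedSectionVars false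

section CycAux

variable [Fintype V] [DecidableEq V] {G : SimpleGraph V} [DecidableRel G.Adj] {w : Sym2 V → ℝ}

lemma cycSubset {c : Finset (Sym2 V)} (hc : IsCycleSet G c) : ∀ f ∈ c, f ∈ G.edgeSet := by
  obtain ⟨v, p, hp, rfl⟩ := hc
  intro f hf
  rw [List.mem_toFinset] at hf
  exact p.edges_subset_edgeSet hf

lemma cycPos (hw : ∀ e ∈ G.edgeSet, 0 < w e) {c : Finset (Sym2 V)} (hc : IsCycleSet G c) :
    ∀ f ∈ c, 0 < w f := fun f hf => hw f (cycSubset hc f hf)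

lemma top_max {c : Finset (Sym2 V)} (hpos : ∀ g ∈ c, 0 < w g) {f : Sym2 V}
    (ht : TopOfSet w c f) : ∀ g ∈ c, w g ≤ w f := by
  intro g hg
  by_cases hgf : g = f
  · subst hgf; exact le_refl _
  · have h1 : w g ≤ ∑ x ∈ c.erase f, w x :=
      Finset.single_le_sum (fun x hx => (hpos x (Finset.mem_of_mem_erase hx)).le)
        (Finset.mem_erase.mpr ⟨hgf, hg⟩)
    linarith [ht.2]

lemma top_sSup {c : Finset (Sym2 V)} (hpos : ∀ g ∈ c, 0 < w g) {f : Sym2 V}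
    (ht : TopOfSet w c f) : sSup (w '' (c : Set (Sym2 V))) = w f := by
  apply le_antisymm
  · refine csSup_le ⟨w f, f, ht.1, rfl⟩ ?_
    rintro x ⟨g, hg, rfl⟩
    exact top_max hpos ht g hg
  · exact le_csSup (c.finite_toSet.image w).bddAbove ⟨f, ht.1, rfl⟩

lemma deficit_top {c : Finset (Sym2 V)} (hpos : ∀ g ∈ c, 0 < w g) {f : Sym2 V}
    (ht : TopOfSet w c f) : deficitSet w c = w f - ∑ g ∈ c.erase f, w g := by
  rw [deficitSet, top_sSup hpos ht, ← Finset.add_sum_erase _ w ht.1]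
  ring

lemma topUnique {c : Finset (Sym2 V)} (hpos : ∀ g ∈ c, 0 < w g) {f g : Sym2 V}
    (h1 : TopOfSet w c f) (h2 : TopOfSet w c g) : f = g := by
  by_contra hne
  have hgf : w g ≤ ∑ x ∈ c.erase f, w x :=
    Finset.single_le_sum (fun x hx => (hpos x (Finset.mem_of_mem_erase hx)).le)
      (Finset.mem_erase.mpr ⟨fun h => hne h.symm, h2.1⟩)
  have hfg : w f ≤ ∑ x ∈ c.erase g, w x :=
    Finset.single_le_sum (fun x hx => (hpos x (Finset.mem_of_mem_erase hx)).le)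
      (Finset.mem_erase.mpr ⟨hne, h1.1⟩)
  linarith [h1.2, h2.2]

lemma deficit_le_delta {c : Finset (Sym2 V)} (hc : IsCycleSet G c) :
    deficitSet w c ≤ deltaG G w := by
  refine le_csSup ?_ ⟨c, hc, rfl⟩
  have hsub : {x : ℝ | ∃ c : Finset (Sym2 V), IsCycleSet G c ∧ deficitSet w c = x}
      ⊆ deficitSet w '' Set.univ := by
    rintro x ⟨c, _, rfl⟩
    exact ⟨c, trivial, rfl⟩
  exact ((Set.finite_univ.image _).subset hsub).bddAbove

lemma delta_pos (hw : ∀ e ∈ G.edgeSet, 0 < w e)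
    (hunb : ∃ c : Finset (Sym2 V), IsCycleSet G c ∧ UnbalancedSet w c) :
    0 < deltaG G w := by
  obtain ⟨c, hc, f, ht⟩ := hunb
  have h1 : 0 < deficitSet w c := by
    rw [deficit_top (cycPos hw hc) ht]
    linarith [ht.2]
  exact h1.trans_le (deficit_le_delta hc)

/-- Classification of the cycle obtained by adding the edge `s(α,β)` to a path `W`. -/
lemma classify (hw : ∀ e ∈ G.edgeSet, 0 < w e) {α β : V} (hadj : G.Adj α β)
    {W : G.Walk α β} (hW : W.IsPath) (hfW : s(α, β) ∉ W.edges) :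
    IsCycleSet G (insert s(α, β) W.edges.toFinset) ∧
    (wlen w W < w s(α, β) →
      TopOfSet w (insert s(α, β) W.edges.toFinset) s(α, β) ∧
      deficitSet w (insert s(α, β) W.edges.toFinset) = w s(α, β) - wlen w W) := by
  have hcyc : (Walk.cons hadj.symm W).IsCycle := by
    rw [Walk.cons_isCycle_iff]
    exact ⟨hW, by rwa [Sym2.eq_swap]⟩
  have hed : (Walk.cons hadj.symm W).edges.toFinset = insert s(α, β) W.edges.toFinset := by
    rw [Walk.edges_cons, List.toFinset_cons, Sym2.eq_swap]
  have hcs : IsCycleSet G (insert s(α, β) W.edges.toFinset) := ⟨β, _, hcyc, hed⟩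
  refine ⟨hcs, fun hlt => ?_⟩
  have hfW' : s(α, β) ∉ W.edges.toFinset := by rwa [List.mem_toFinset]
  have hsum : ∑ g ∈ (insert s(α, β) W.edges.toFinset).erase s(α, β), w g = wlen w W := by
    rw [Finset.erase_insert hfW', trail_sum_eq hW.isTrail]
  have htop : TopOfSet w (insert s(α, β) W.edges.toFinset) s(α, β) := by
    refine ⟨Finset.mem_insert_self _ _, ?_⟩
    rw [hsum]; exact hlt
  refine ⟨htop, ?_⟩
  rw [deficit_top (cycPos hw hcs) htop, hsum]

/-- There is no short walk between the endpoints of a heavy edge. -/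
lemma no_short_walk (hconn : G.Connected) (hw : ∀ e ∈ G.edgeSet, 0 < w e)
    (hunb : ∃ c : Finset (Sym2 V), IsCycleSet G c ∧ UnbalancedSet w c)
    {α β : V} (hadj : G.Adj α β) (W : G.Walk α β)
    (hW : wlen w W < w s(α, β) - deltaG G w) : False := by
  have hδ := delta_pos hw hunb
  obtain ⟨p, hp, hpl⟩ := exists_shortest (w := w) hconn α β
  have hple : wlen w p ≤ wlen w W := by
    rw [hpl]; exact spDist_le_walk hw W
  have hfp : s(α, β) ∉ p.edges := by
    intro h
    have := weight_le_wlen hw h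
    linarith
  obtain ⟨hcs, hcls⟩ := classify hw hadj hp hfp
  have hlt : wlen w p < w s(α, β) := by linarith
  obtain ⟨htop, hdef⟩ := hcls hlt
  have := deficit_le_delta (w := w) hcs
  rw [hdef] at this
  linarith

end CycAux

section StructAux

variable {G : SimpleGraph V} {w : Sym2 V → ℝ}

lemma firstEdge {u v : V} {r : G.Walk u v} (hr : r.IsPath) {f : Sym2 V}
    (hf : f ∈ r.edges) (hu : u ∈ f) :
    ∃ (y : V) (h : G.Adj u y) (r' : G.Walk y v), r = Walk.cons h r' ∧ f = s(u, y) := by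
  cases r with
  | nil => simp at hf
  | cons h q =>
    rw [Walk.edges_cons, List.mem_cons] at hf
    rcases hf with rfl | hf
    · exact ⟨_, h, q, rfl, rfl⟩
    · exfalso
      obtain ⟨z, rfl⟩ := Sym2.mem_iff_exists.mp hu
      have hus : u ∈ q.support := q.fst_mem_support_of_mem_edges hf
      exact ((Walk.cons_isPath_iff h q).mp hr).2 hus

lemma edges_subset_path_eq {u v : V} (Q : G.Walk u v) :
    ∀ (P : G.Walk u v), Q.IsPath → P.IsPath →
    (∀ f ∈ Q.edges, f ∈ P.edges) → Q = P := by
  induction Q with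
  | nil =>
    intro P _ hP _
    exact (Walk.isPath_iff_eq_nil.mp hP).symm
  | @cons u y v h q ih =>
    intro P hQ hP hsub
    have hf1 : s(u, y) ∈ P.edges := hsub _ (by simp)
    obtain ⟨y', h', P', rfl, hfe⟩ := firstEdge hP hf1 (Sym2.mem_mk_left u y)
    obtain rfl : y = y' := Sym2.congr_right.mp hfe
    have hQ' : q.IsPath := hQ.of_cons
    have huq : u ∉ q.support := ((Walk.cons_isPath_iff h q).mp hQ).2
    have hP'path : P'.IsPath := hP.of_cons
    have hsub' : ∀ f ∈ q.edges, f ∈ P'.edges := by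
      intro f hfq
      have := hsub f (by rw [Walk.edges_cons]; exact List.mem_cons_of_mem _ hfq)
      rw [Walk.edges_cons, List.mem_cons] at this
      rcases this with rfl | hok
      · exfalso
        exact huq (q.fst_mem_support_of_mem_edges hfq)
      · exact hok
    rw [ih P' hQ' hP'path hsub']

lemma split_at_edge {u v x y : V} (p : G.Walk u v) (h : s(x, y) ∈ p.edges) :
    (∃ (hxy : G.Adj x y) (Q : G.Walk u x) (R : G.Walk y v),
        p = Q.append (Walk.cons hxy R)) ∨
    (∃ (hyx : G.Adj y x) (Q : G.Walk u y) (R : G.Walk x v),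
        p = Q.append (Walk.cons hyx R)) := by
  induction p with
  | nil => simp at h
  | @cons a b c hab q ih =>
    rw [Walk.edges_cons, List.mem_cons] at h
    rcases h with heq | hmem
    · rw [Sym2.eq_iff] at heq
      rcases heq with ⟨rfl, rfl⟩ | ⟨rfl, rfl⟩
      · exact Or.inl ⟨hab, Walk.nil, q, by simp⟩
      · exact Or.inr ⟨hab, Walk.nil, q, by simp⟩
    · rcases ih hmem with ⟨hxy, Q, R, rfl⟩ | ⟨hyx, Q, R, rfl⟩
      · exact Or.inl ⟨hxy, Walk.cons hab Q, R, by simp⟩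
      · exact Or.inr ⟨hyx, Walk.cons hab Q, R, by simp⟩

lemma append_cons_cancel {σ τ v : V} {u : V} (Q : G.Walk u σ) :
    ∀ (Q' : G.Walk u σ) (h h' : G.Adj σ τ) (R R' : G.Walk τ v),
    (Q.append (Walk.cons h R)).IsPath →
    Q.append (Walk.cons h R) = Q'.append (Walk.cons h' R') → Q = Q' ∧ R = R' := by
  induction Q with
  | nil =>
    intro Q' h h' R R' hp heq
    have hQ' : Q'.IsPath := Walk.IsPath.of_append_left (heq ▸ hp)
    have hQnil : Q' = Walk.nil := Walk.isPath_iff_eq_nil.mp hQ'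
    subst hQnil
    simp only [Walk.nil_append] at heq
    refine ⟨rfl, ?_⟩
    injection heq
  | @cons u z σ hadj q ih =>
    intro Q' h h' R R' hp heq
    cases Q' with
    | nil =>
      exfalso
      have hQ : (Walk.cons hadj q).IsPath := Walk.IsPath.of_append_left hp
      have := Walk.isPath_iff_eq_nil.mp hQ
      simp at this
    | @cons _ z' _ hadj' q' =>
      injection heq with h1 h2 h3 h4
      subst h2
      have hp' : (q.append (Walk.cons h R)).IsPath := by
        have := (Walk.cons_isPath_iff hadj (q.append (Walk.cons h R))).mp (by exact hp)
        exact this.1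
      obtain ⟨hq, hR⟩ := ih q' h h' R R' hp' (eq_of_heq h4)
      exact ⟨by rw [hq], hR⟩

lemma path_append_path {u m v : V} {P : G.Walk u m} {Q : G.Walk m v}
    (hP : P.IsPath) (hQ : Q.IsPath)
    (hmeet : ∀ x ∈ P.support, x ∈ Q.support → x = m) : (P.append Q).IsPath := by
  rw [Walk.isPath_def, Walk.support_append]
  rw [List.nodup_append]
  refine ⟨hP.support_nodup, hQ.support_nodup.tail, ?_⟩
  intro x hxP y hxQt hxy
  subst hxy
  have hxQ : x ∈ Q.support := by
    rw [Q.support_eq_cons]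
    exact List.mem_cons_of_mem _ hxQt
  have hxm : x = m := hmeet x hxP hxQ
  subst hxm
  have : Q.support.Nodup := hQ.support_nodup
  rw [Q.support_eq_cons, List.nodup_cons] at this
  exact this.1 hxQt

lemma not_darts_both {u v x y : V} {W : G.Walk u v} (hW : W.IsTrail) (hxy : x ≠ y)
    (h1 : G.Adj x y)
    (hd1 : (⟨(x, y), h1⟩ : G.Dart) ∈ W.darts)
    (hd2 : (⟨(y, x), h1.symm⟩ : G.Dart) ∈ W.darts) : False := by
  have hnd : (W.darts.map Dart.edge).Nodup := hW.edges_nodup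
  have heq : Dart.edge (⟨(x, y), h1⟩ : G.Dart) = Dart.edge (⟨(y, x), h1.symm⟩ : G.Dart) := by
    show s(x, y) = s(y, x)
    exact Sym2.eq_swap
  have := List.inj_on_of_nodup_map hnd hd1 hd2 heq
  have : x = y := congrArg (fun d : G.Dart => d.fst) this
  exact hxy this

lemma dart_mem_join {a b : V} {s t : V} (hst : G.Adj s t) (Q : G.Walk a s) (R : G.Walk t b) :
    (⟨(s, t), hst⟩ : G.Dart) ∈ (Q.append (Walk.cons hst R)).darts := by
  rw [Walk.darts_append, List.mem_append, Walk.darts_cons]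
  exact Or.inr List.mem_cons_self

end StructAux

section DecompAux

variable [Fintype V] [DecidableEq V] {G : SimpleGraph V} [DecidableRel G.Adj] {w : Sym2 V → ℝ}

lemma perm_toFinset {X : Type*} [DecidableEq X] {l l' : List X} (h : l.Perm l') :
    l.toFinset = l'.toFinset := by
  ext z; simp [List.mem_toFinset, h.mem_iff]

/-- Any cycle edge-set containing an edge `s(α,β)` decomposes as that edge plus
a path from `α` to `β` avoiding the edge. -/
lemma cycle_decomp {c : Finset (Sym2 V)} (hc : IsCycleSet G c) {α β : V}
    (hadj : G.Adj α β) (hfc : s(α, β) ∈ c) :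
    ∃ P : G.Walk α β, P.IsPath ∧ s(α, β) ∉ P.edges ∧
      insert s(α, β) P.edges.toFinset = c := by
  obtain ⟨v, p, hcyc, rfl⟩ := hc
  rw [List.mem_toFinset] at hfc
  have hα : α ∈ p.support := p.fst_mem_support_of_mem_edges hfc
  have hrotE : (p.rotate α hα).edges.toFinset = p.edges.toFinset :=
    perm_toFinset (p.rotate_edges α hα).perm
  have hrotC : (p.rotate α hα).IsCycle := hcyc.rotate hα
  have hrotf : s(α, β) ∈ (p.rotate α hα).edges := by
    rw [← List.mem_toFinset, hrotE, List.mem_toFinset]; exact hfc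
  set q := p.rotate α hα with hq
  clear_value q
  clear hq
  cases q with
  | nil => exact absurd rfl hrotC.ne_nil
  | @cons _ x _ h r =>
    obtain ⟨hrpath, hfirst⟩ := (Walk.cons_isCycle_iff r h).mp hrotC
    rw [Walk.edges_cons, List.mem_cons] at hrotf
    rw [Walk.edges_cons, List.toFinset_cons] at hrotE
    rcases hrotf with heq | hmem
    · -- the rotated cycle starts with the edge s(α,β)
      obtain rfl : x = β := by
        rw [Sym2.eq_iff] at heq
        rcases heq with ⟨-, rfl⟩ | ⟨rfl, rfl⟩
        · rfl
        · exact absurd rfl hadj.ne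
      refine ⟨r.reverse, hrpath.reverse, ?_, ?_⟩
      · rw [Walk.edges_reverse, List.mem_reverse]
        rwa [← heq] at hfirst
      · rw [← hrotE, ← heq]
        congr 1
        rw [Walk.edges_reverse]
        exact perm_toFinset (List.reverse_perm _)
    · -- the edge s(α,β) occurs inside r, necessarily as its last edge
      have hαf : α ∈ s(α, β) := Sym2.mem_mk_left α β
      have hmem' : s(α, β) ∈ r.reverse.edges := by
        rw [Walk.edges_reverse, List.mem_reverse]; exact hmem
      obtain ⟨y, h₂, r₂, hrev, hfy⟩ := firstEdge hrpath.reverse hmem' hαf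
      obtain rfl : y = β := (Sym2.congr_right.mp hfy).symm
      -- now the target vertex is named `y`
      have hr : r = r₂.reverse.append (Walk.cons h₂.symm Walk.nil) := by
        have h5 : r.reverse.reverse = (Walk.cons h₂ r₂).reverse := by rw [hrev]
        rwa [Walk.reverse_reverse, Walk.reverse_cons] at h5
      have hr₂path : r₂.IsPath := ((Walk.cons_isPath_iff h₂ r₂).mp (hrev ▸ hrpath.reverse)).1
      have hαr₂ : α ∉ r₂.support := ((Walk.cons_isPath_iff h₂ r₂).mp (hrev ▸ hrpath.reverse)).2
      have hlastE : (Walk.cons h₂.symm (Walk.nil : G.Walk α α)).edges = [s(y, α)] := by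
        simp
      refine ⟨Walk.cons h r₂.reverse, ?_, ?_, ?_⟩
      · apply Walk.IsPath.cons hr₂path.reverse
        rwa [Walk.support_reverse, List.mem_reverse]
      · rw [Walk.edges_cons, List.mem_cons]
        rintro (heq2 | hmem2)
        · rw [heq2] at hmem; exact hfirst hmem
        · have hnd : r.edges.Nodup := hrpath.isTrail.edges_nodup
          rw [hr, Walk.edges_append] at hnd
          have hmem3 : s(α, y) ∈ r₂.reverse.edges := hmem2
          have hlast : s(α, y) ∈ (Walk.cons h₂.symm (Walk.nil : G.Walk α α)).edges := by
            rw [hlastE]; simp [Sym2.eq_swap]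
          exact (List.disjoint_of_nodup_append hnd) hmem3 hlast
      · rw [← hrotE, Walk.edges_cons, List.toFinset_cons, hr, Walk.edges_append, hlastE]
        simp only [List.toFinset_append, Walk.edges_reverse, List.toFinset_reverse]
        ext z
        simp only [Finset.mem_insert, Finset.mem_union, Finset.mem_singleton,
          List.toFinset_cons, List.toFinset_nil, LawfulSingleton.insert_empty_eq]
        constructor
        · rintro (rfl | rfl | hz)
          · right; right; exact Sym2.eq_swap
          · left; rfl
          · tauto
        · rintro (rfl | hz | rfl)
          · right; left; rfl
          · tauto
          · left; exact Sym2.eq_swap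

end DecompAux

section BuildAux

variable [Fintype V] [DecidableEq V] {G : SimpleGraph V} [DecidableRel G.Adj] {w : Sym2 V → ℝ}

lemma build_main (hconn : G.Connected) (hw : ∀ e ∈ G.edgeSet, 0 < w e)
    (hunb : ∃ c : Finset (Sym2 V), IsCycleSet G c ∧ UnbalancedSet w c)
    {s t : V} (hst : G.Adj s t) {α β : V} (hadj : G.Adj α β)
    (Q : G.Walk α s) (R : G.Walk t β) (hQ : Q.IsPath) (hR : R.IsPath)
    (hQl : wlen w Q = spDist G w α s) (hRl : wlen w R = spDist G w t β)
    (hfEq : w s(α, β) = spDist G w α s + w s(s, t) + spDist G w t β + deltaG G w) :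
    (Q.append (Walk.cons hst R)).IsPath ∧
    s(α, β) ∉ (Q.append (Walk.cons hst R)).edges ∧
    IsCycleSet G (insert s(α, β) (Q.append (Walk.cons hst R)).edges.toFinset) ∧
    TopOfSet w (insert s(α, β) (Q.append (Walk.cons hst R)).edges.toFinset) s(α, β) ∧
    UnbalancedSet w (insert s(α, β) (Q.append (Walk.cons hst R)).edges.toFinset) ∧
    s(s, t) ∈ insert s(α, β) (Q.append (Walk.cons hst R)).edges.toFinset ∧
    ¬ TopOfSet w (insert s(α, β) (Q.append (Walk.cons hst R)).edges.toFinset) s(s, t) ∧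
    deficitSet w (insert s(α, β) (Q.append (Walk.cons hst R)).edges.toFinset) = deltaG G w := by
  have hδ : 0 < deltaG G w := delta_pos hw hunb
  have he : 0 < w s(s, t) := hw _ (G.mem_edgeSet.mpr hst)
  have hwQ : 0 ≤ wlen w Q := wlen_nonneg hw Q
  have hwR : 0 ≤ wlen w R := wlen_nonneg hw R
  have hkey : ∀ x, x ∈ Q.support → x ∈ R.support → False := by
    intro x hxQ hxR
    have h1 : wlen w (Q.takeUntil x hxQ) + wlen w (Q.dropUntil x hxQ) = wlen w Q := by
      rw [← wlen_append, Walk.take_spec]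
    have h2 : wlen w (R.takeUntil x hxR) + wlen w (R.dropUntil x hxR) = wlen w R := by
      rw [← wlen_append, Walk.take_spec]
    have h3 : 0 ≤ wlen w (Q.dropUntil x hxQ) := wlen_nonneg hw _
    have h4 : 0 ≤ wlen w (R.takeUntil x hxR) := wlen_nonneg hw _
    apply no_short_walk hconn hw hunb hadj
      ((Q.takeUntil x hxQ).append (R.dropUntil x hxR))
    rw [wlen_append]
    have h5 : 0 ≤ wlen w (R.dropUntil x hxR) := wlen_nonneg hw _
    linarith [hfEq, hQl, hRl]
  have hsR : s ∉ R.support := fun hs => hkey s Q.end_mem_support hs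
  have hconsR : (Walk.cons hst R).IsPath := hR.cons hsR
  have hWpath : (Q.append (Walk.cons hst R)).IsPath := by
    apply path_append_path hQ hconsR
    intro x hxQ hxC
    rw [Walk.support_cons, List.mem_cons] at hxC
    rcases hxC with rfl | hxR
    · rfl
    · exact absurd hxR (fun hh => hkey x hxQ hh)
  have hWlen : wlen w (Q.append (Walk.cons hst R)) = wlen w Q + (w s(s, t) + wlen w R) := by
    rw [wlen_append, wlen_cons]
  have hfW : s(α, β) ∉ (Q.append (Walk.cons hst R)).edges := by
    intro hmem
    have hle := weight_le_wlen hw hmem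
    rw [hWlen] at hle
    linarith [hfEq, hQl, hRl]
  obtain ⟨hcs, hcls⟩ := classify hw hadj hWpath hfW
  have hlt : wlen w (Q.append (Walk.cons hst R)) < w s(α, β) := by
    rw [hWlen]; linarith [hfEq, hQl, hRl]
  obtain ⟨htop, hdef⟩ := hcls hlt
  have hec : s(s, t) ∈ insert s(α, β) (Q.append (Walk.cons hst R)).edges.toFinset := by
    apply Finset.mem_insert_of_mem
    rw [List.mem_toFinset, Walk.edges_append, List.mem_append, Walk.edges_cons]
    exact Or.inr List.mem_cons_self
  have hnet : ¬ TopOfSet w (insert s(α, β) (Q.append (Walk.cons hst R)).edges.toFinset) s(s, t) := by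
    intro hte
    have heq := topUnique (cycPos hw hcs) hte htop
    have : w s(s, t) = w s(α, β) := by rw [heq]
    linarith [hfEq, hQl, hRl]
  refine ⟨hWpath, hfW, hcs, htop, ⟨_, htop⟩, hec, hnet, ?_⟩
  rw [hdef, hWlen]
  linarith [hfEq, hQl, hRl]

end BuildAux

section DecompMain

variable [Fintype V] [DecidableEq V] {G : SimpleGraph V} [DecidableRel G.Adj] {w : Sym2 V → ℝ}

lemma decomp_main (hconn : G.Connected) (hw : ∀ e ∈ G.edgeSet, 0 < w e)
    (hunb : ∃ c : Finset (Sym2 V), IsCycleSet G c ∧ UnbalancedSet w c)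
    {s t : V} (hst : G.Adj s t)
    {c : Finset (Sym2 V)} (hcyc : IsCycleSet G c)
    (hec : s(s, t) ∈ c) (hnet : ¬ TopOfSet w c s(s, t)) (hdef : deficitSet w c = deltaG G w)
    {α β : V} (hadj : G.Adj α β) (htop : TopOfSet w c s(α, β)) :
    (∃ (Q : G.Walk α s) (R : G.Walk t β), Q.IsPath ∧ R.IsPath ∧
        wlen w Q = spDist G w α s ∧ wlen w R = spDist G w t β ∧
        w s(α, β) = spDist G w α s + w s(s, t) + spDist G w t β + deltaG G w ∧
        insert s(α, β) ((Q.append (Walk.cons hst R)).edges.toFinset) = c) ∨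
    (∃ (Q : G.Walk β s) (R : G.Walk t α), Q.IsPath ∧ R.IsPath ∧
        wlen w Q = spDist G w β s ∧ wlen w R = spDist G w t α ∧
        w s(β, α) = spDist G w β s + w s(s, t) + spDist G w t α + deltaG G w ∧
        insert s(β, α) ((Q.append (Walk.cons hst R)).edges.toFinset) = c) := by
  have hδ : 0 < deltaG G w := delta_pos hw hunb
  have he : 0 < w s(s, t) := hw _ (G.mem_edgeSet.mpr hst)
  obtain ⟨P, hP, hfP, hins⟩ := cycle_decomp hcyc hadj htop.1
  have hne : s(s, t) ≠ s(α, β) := fun h => hnet (h ▸ htop)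
  have heP : s(s, t) ∈ P.edges := by
    have : s(s, t) ∈ insert s(α, β) P.edges.toFinset := hins ▸ hec
    rcases Finset.mem_insert.mp this with h | h
    · exact absurd h hne
    · exact List.mem_toFinset.mp h
  have hfP' : s(α, β) ∉ P.edges.toFinset := by rwa [List.mem_toFinset]
  -- the total length identity
  have hsumP : w s(α, β) = wlen w P + deltaG G w := by
    have h1 : deltaG G w = w s(α, β) - ∑ g ∈ c.erase s(α, β), w g := by
      rw [← hdef, deficit_top (cycPos hw hcyc) htop]
    have h2 : ∑ g ∈ c.erase s(α, β), w g = wlen w P := by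
      rw [← hins, Finset.erase_insert hfP', trail_sum_eq hP.isTrail]
    rw [h1, h2]; ring
  rcases split_at_edge P heP with ⟨hxy, Q, R, hPQR⟩ | ⟨hyx, Q, R, hPQR⟩
  · -- forward traversal s → t : X case
    subst hPQR
    have hQ : Q.IsPath := hP.of_append_left
    have hcR : (Walk.cons hxy R).IsPath := hP.of_append_right
    have hR : R.IsPath := hcR.of_cons
    have hWlen : wlen w (Q.append (Walk.cons hxy R)) = wlen w Q + (w s(s, t) + wlen w R) := by
      rw [wlen_append, wlen_cons]
    have hsum : w s(α, β) = wlen w Q + w s(s, t) + wlen w R + deltaG G w := by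
      rw [hsumP, hWlen]; ring
    have hQs : wlen w Q = spDist G w α s := by
      refine le_antisymm ?_ (spDist_le_path hQ)
      by_contra hgt
      push_neg at hgt
      obtain ⟨Q', hQ', hQ'l⟩ := exists_shortest (w := w) hconn α s
      apply no_short_walk hconn hw hunb hadj (Q'.append (Walk.cons hxy R))
      rw [wlen_append, wlen_cons, hQ'l]
      linarith [spDist_le_path (w := w) hQ]
    have hRs : wlen w R = spDist G w t β := by
      refine le_antisymm ?_ (spDist_le_path hR)
      by_contra hgt
      push_neg at hgt
      obtain ⟨R', hR', hR'l⟩ := exists_shortest (w := w) hconn t β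
      apply no_short_walk hconn hw hunb hadj (Q.append (Walk.cons hxy R'))
      rw [wlen_append, wlen_cons, hR'l]
      linarith [spDist_le_path (w := w) hR]
    exact Or.inl ⟨Q, R, hQ, hR, hQs, hRs, by rw [← hQs, ← hRs]; exact hsum, hins⟩
  · -- backward traversal t → s : Y case
    subst hPQR
    have hQ : Q.IsPath := hP.of_append_left
    have hcR : (Walk.cons hyx R).IsPath := hP.of_append_right
    have hR : R.IsPath := hcR.of_cons
    have hts : w s(t, s) = w s(s, t) := by rw [Sym2.eq_swap]
    have hWlen : wlen w (Q.append (Walk.cons hyx R)) = wlen w Q + (w s(s, t) + wlen w R) := by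
      rw [wlen_append, wlen_cons, hts]
    have hsum : w s(α, β) = wlen w Q + w s(s, t) + wlen w R + deltaG G w := by
      rw [hsumP, hWlen]; ring
    have hQs : wlen w R.reverse = spDist G w β s := by
      rw [wlen_reverse]
      refine le_antisymm ?_ ?_
      · by_contra hgt
        push_neg at hgt
        obtain ⟨R', hR', hR'l⟩ := exists_shortest (w := w) hconn β s
        apply no_short_walk hconn hw hunb hadj (Q.append (Walk.cons hyx R'.reverse))
        rw [wlen_append, wlen_cons, wlen_reverse, hR'l, hts]
        linarith
      · have := spDist_le_path (w := w) hR.reverse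
        rwa [wlen_reverse] at this
    have hRs : wlen w Q.reverse = spDist G w t α := by
      rw [wlen_reverse]
      refine le_antisymm ?_ ?_
      · by_contra hgt
        push_neg at hgt
        obtain ⟨Q', hQ', hQ'l⟩ := exists_shortest (w := w) hconn t α
        apply no_short_walk hconn hw hunb hadj (Q'.reverse.append (Walk.cons hyx R))
        rw [wlen_append, wlen_cons, wlen_reverse, hQ'l, hts]
        linarith
      · have := spDist_le_path (w := w) hQ.reverse
        rwa [wlen_reverse] at this
    refine Or.inr ⟨R.reverse, Q.reverse, hR.reverse, hQ.reverse, hQs, hRs, ?_, ?_⟩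
    · rw [Sym2.eq_swap (a := β), ← hQs, ← hRs, wlen_reverse, wlen_reverse]
      rw [hsum]; ring
    · rw [← hins]
      have hswap : s(β, α) = s(α, β) := Sym2.eq_swap
      rw [hswap]
      congr 1
      ext z
      simp only [List.mem_toFinset, Walk.edges_append, Walk.edges_cons, Walk.edges_reverse,
        List.mem_append, List.mem_cons, List.mem_reverse]
      constructor
      · rintro (hz | rfl | hz)
        · exact Or.inr (Or.inr hz)
        · exact Or.inr (Or.inl Sym2.eq_swap)
        · exact Or.inl hz
      · rintro (hz | rfl | hz)
        · exact Or.inr (Or.inr hz)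
        · exact Or.inr (Or.inl Sym2.eq_swap)
        · exact Or.inl hz

end DecompMain

section InjAux

variable [Fintype V] [DecidableEq V] {G : SimpleGraph V} [DecidableRel G.Adj] {w : Sym2 V → ℝ}

lemma insert_cancel {f : Sym2 V} {A B : Finset (Sym2 V)} (hA : f ∉ A) (hB : f ∉ B)
    (h : insert f A = insert f B) : A = B := by
  ext z
  constructor
  · intro hz
    have : z ∈ insert f B := h ▸ Finset.mem_insert_of_mem hz
    rcases Finset.mem_insert.mp this with rfl | hz'
    · exact absurd hz hA
    · exact hz'
  · intro hz
    have : z ∈ insert f A := h.symm ▸ Finset.mem_insert_of_mem hz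
    rcases Finset.mem_insert.mp this with rfl | hz'
    · exact absurd hz hB
    · exact hz'

lemma inj_same {α β s t : V} (hst : G.Adj s t)
    (Q Q' : G.Walk α s) (R R' : G.Walk t β)
    (hW : (Q.append (Walk.cons hst R)).IsPath)
    (hW' : (Q'.append (Walk.cons hst R')).IsPath)
    (hfW : s(α, β) ∉ (Q.append (Walk.cons hst R)).edges)
    (hfW' : s(α, β) ∉ (Q'.append (Walk.cons hst R')).edges)
    (hceq : insert s(α, β) (Q.append (Walk.cons hst R)).edges.toFinset
          = insert s(α, β) (Q'.append (Walk.cons hst R')).edges.toFinset) :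
    Q = Q' ∧ R = R' := by
  have htf : (Q.append (Walk.cons hst R)).edges.toFinset
      = (Q'.append (Walk.cons hst R')).edges.toFinset :=
    insert_cancel (by rwa [List.mem_toFinset]) (by rwa [List.mem_toFinset]) hceq
  have hsub : ∀ f ∈ (Q'.append (Walk.cons hst R')).edges,
      f ∈ (Q.append (Walk.cons hst R)).edges := by
    intro f hf
    rw [← List.mem_toFinset, ← htf, List.mem_toFinset] at hf
    exact hf
  have hWW : Q'.append (Walk.cons hst R') = Q.append (Walk.cons hst R) :=
    edges_subset_path_eq _ _ hW' hW hsub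
  exact append_cons_cancel Q Q' hst hst R R' hW hWW.symm

lemma inj_cross {α β s t : V} (hst : G.Adj s t)
    (Q : G.Walk α s) (R : G.Walk t β) (Q' : G.Walk β s) (R' : G.Walk t α)
    (hW : (Q.append (Walk.cons hst R)).IsPath)
    (hW' : (Q'.append (Walk.cons hst R')).IsPath)
    (hfW : s(α, β) ∉ (Q.append (Walk.cons hst R)).edges)
    (hfW' : s(β, α) ∉ (Q'.append (Walk.cons hst R')).edges)
    (hceq : insert s(α, β) (Q.append (Walk.cons hst R)).edges.toFinset
          = insert s(β, α) (Q'.append (Walk.cons hst R')).edges.toFinset) :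
    False := by
  have hswap : s(β, α) = s(α, β) := Sym2.eq_swap
  rw [hswap] at hceq hfW'
  have htf : (Q.append (Walk.cons hst R)).edges.toFinset
      = (Q'.append (Walk.cons hst R')).edges.toFinset :=
    insert_cancel (by rwa [List.mem_toFinset]) (by rwa [List.mem_toFinset]) hceq
  have hsub : ∀ f ∈ (Q'.append (Walk.cons hst R')).reverse.edges,
      f ∈ (Q.append (Walk.cons hst R)).edges := by
    intro f hf
    rw [Walk.edges_reverse, List.mem_reverse, ← List.mem_toFinset, ← htf,
      List.mem_toFinset] at hf
    exact hf
  have hWW : (Q'.append (Walk.cons hst R')).reverse = Q.append (Walk.cons hst R) :=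
    edges_subset_path_eq _ _ hW'.reverse hW hsub
  have hd1 : (⟨(s, t), hst⟩ : G.Dart) ∈ (Q.append (Walk.cons hst R)).darts :=
    dart_mem_join hst Q R
  have hd2' : (⟨(s, t), hst⟩ : G.Dart) ∈ (Q'.append (Walk.cons hst R')).darts :=
    dart_mem_join hst Q' R'
  have hd2 : (⟨(t, s), hst.symm⟩ : G.Dart) ∈ (Q.append (Walk.cons hst R)).darts := by
    rw [← hWW]
    rw [Walk.mem_darts_reverse]
    exact hd2'
  exact not_darts_both hW.isTrail hst.ne hst hd1 hd2

end InjAux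

section TypesAux

variable [Fintype V] [DecidableEq V]

/-- The type of shortest paths from `u` to `v`. -/
abbrev SPt (G : SimpleGraph V) (w : Sym2 V → ℝ) (u v : V) : Type _ :=
  {p : G.Walk u v // p.IsPath ∧ wlen w p = spDist G w u v}

lemma csp_eq_card (G : SimpleGraph V) (w : Sym2 V → ℝ) (u v : V) :
    csp G w u v = Nat.card (SPt G w u v) := rfl

instance SPt.finite (G : SimpleGraph V) [DecidableRel G.Adj] (w : Sym2 V → ℝ) (u v : V) :
    Finite (SPt G w u v) := by
  apply Finite.of_injective
    (fun x : {p : G.Walk u v // p.IsPath ∧ wlen w p = spDist G w u v} =>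
      (⟨x.1, x.2.1⟩ : G.Path u v))
  rintro ⟨pa, ha⟩ ⟨pb, hb⟩ h
  simp only [Subtype.mk.injEq] at h ⊢
  exact h

end TypesAux

section MapAux

variable [Fintype V] [DecidableEq V]

abbrev Atype (G : SimpleGraph V) (w : Sym2 V → ℝ) (s t : V) : Type _ :=
  {c : Finset (Sym2 V) // IsCycleSet G c ∧ UnbalancedSet w c ∧ s(s, t) ∈ c ∧
    ¬ TopOfSet w c s(s, t) ∧ deficitSet w c = deltaG G w}

abbrev Btype (G : SimpleGraph V) [DecidableRel G.Adj] (w : Sym2 V → ℝ)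
    (o : Sym2 V → V × V) (s t : V) : Type _ :=
  (Σ f : {f : Sym2 V // f ∈ G.edgeFinset.filter (fun f => w f =
      spDist G w (o f).1 s + w s(s, t) + spDist G w t (o f).2 + deltaG G w)},
    SPt G w (o f.1).1 s × SPt G w t (o f.1).2) ⊕
  (Σ f : {f : Sym2 V // f ∈ G.edgeFinset.filter (fun f => w f =
      spDist G w (o f).2 s + w s(s, t) + spDist G w t (o f).1 + deltaG G w)},
    SPt G w (o f.1).2 s × SPt G w t (o f.1).1)

variable {G : SimpleGraph V} [DecidableRel G.Adj] {w : Sym2 V → ℝ}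

lemma oriented_adj {o : Sym2 V → V × V} (ho : ∀ e ∈ G.edgeSet, s((o e).1, (o e).2) = e)
    {f : Sym2 V} (hf : f ∈ G.edgeSet) : G.Adj (o f).1 (o f).2 :=
  G.mem_edgeSet.mp (by rw [ho f hf]; exact hf)

def gmap (hconn : G.Connected) (hw : ∀ e ∈ G.edgeSet, 0 < w e)
    (hunb : ∃ c : Finset (Sym2 V), IsCycleSet G c ∧ UnbalancedSet w c)
    (o : Sym2 V → V × V) (ho : ∀ e ∈ G.edgeSet, s((o e).1, (o e).2) = e)
    {s t : V} (hst : G.Adj s t) :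
    Btype G w o s t → Atype G w s t := fun b =>
  match b with
  | Sum.inl ⟨⟨f, hf⟩, Q, R⟩ =>
    ⟨insert s((o f).1, (o f).2) ((Q.1.append (Walk.cons hst R.1)).edges.toFinset), by
      have hmem := Finset.mem_filter.mp hf
      have hfe : f ∈ G.edgeSet := mem_edgeFinset.mp hmem.1
      have hadj : G.Adj (o f).1 (o f).2 := oriented_adj ho hfe
      have hfEq : w s((o f).1, (o f).2) = spDist G w (o f).1 s + w s(s, t) +
          spDist G w t (o f).2 + deltaG G w := by rw [ho f hfe]; exact hmem.2
      have hb := build_main hconn hw hunb hst hadj Q.1 R.1 Q.2.1 R.2.1 Q.2.2 R.2.2 hfEq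
      exact ⟨hb.2.2.1, hb.2.2.2.2.1, hb.2.2.2.2.2.1, hb.2.2.2.2.2.2.1, hb.2.2.2.2.2.2.2⟩⟩
  | Sum.inr ⟨⟨f, hf⟩, Q, R⟩ =>
    ⟨insert s((o f).2, (o f).1) ((Q.1.append (Walk.cons hst R.1)).edges.toFinset), by
      have hmem := Finset.mem_filter.mp hf
      have hfe : f ∈ G.edgeSet := mem_edgeFinset.mp hmem.1
      have hadj : G.Adj (o f).2 (o f).1 := (oriented_adj ho hfe).symm
      have hfEq : w s((o f).2, (o f).1) = spDist G w (o f).2 s + w s(s, t) +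
          spDist G w t (o f).1 + deltaG G w := by
        rw [Sym2.eq_swap, ho f hfe]; exact hmem.2
      have hb := build_main hconn hw hunb hst hadj Q.1 R.1 Q.2.1 R.2.1 Q.2.2 R.2.2 hfEq
      exact ⟨hb.2.2.1, hb.2.2.2.2.1, hb.2.2.2.2.2.1, hb.2.2.2.2.2.2.1, hb.2.2.2.2.2.2.2⟩⟩

lemma gmap_injective (hconn : G.Connected) (hw : ∀ e ∈ G.edgeSet, 0 < w e)
    (hunb : ∃ c : Finset (Sym2 V), IsCycleSet G c ∧ UnbalancedSet w c)
    (o : Sym2 V → V × V) (ho : ∀ e ∈ G.edgeSet, s((o e).1, (o e).2) = e)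
    {s t : V} (hst : G.Adj s t) :
    Function.Injective (gmap hconn hw hunb o ho hst) := by
  rintro (⟨⟨f, hf⟩, Q, R⟩ | ⟨⟨f, hf⟩, Q, R⟩) (⟨⟨f', hf'⟩, Q', R'⟩ | ⟨⟨f', hf'⟩, Q', R'⟩) heq <;>
    have hv := congrArg Subtype.val heq <;>
    simp only [gmap] at hv
  · -- inl / inl
    have hmem := Finset.mem_filter.mp hf
    have hfe : f ∈ G.edgeSet := mem_edgeFinset.mp hmem.1
    have hadj : G.Adj (o f).1 (o f).2 := oriented_adj ho hfe
    have hfEq : w s((o f).1, (o f).2) = spDist G w (o f).1 s + w s(s, t) +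
        spDist G w t (o f).2 + deltaG G w := by rw [ho f hfe]; exact hmem.2
    have hb := build_main hconn hw hunb hst hadj Q.1 R.1 Q.2.1 R.2.1 Q.2.2 R.2.2 hfEq
    have hmem' := Finset.mem_filter.mp hf'
    have hfe' : f' ∈ G.edgeSet := mem_edgeFinset.mp hmem'.1
    have hadj' : G.Adj (o f').1 (o f').2 := oriented_adj ho hfe'
    have hfEq' : w s((o f').1, (o f').2) = spDist G w (o f').1 s + w s(s, t) +
        spDist G w t (o f').2 + deltaG G w := by rw [ho f' hfe']; exact hmem'.2
    have hb' := build_main hconn hw hunb hst hadj' Q'.1 R'.1 Q'.2.1 R'.2.1 Q'.2.2 R'.2.2 hfEq'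
    -- tops coincide, hence f = f'
    have htop1 := hb.2.2.2.1
    have htop2 := hb'.2.2.2.1
    rw [hv] at htop1
    have hff : s((o f).1, (o f).2) = s((o f').1, (o f').2) :=
      topUnique (cycPos hw hb'.2.2.1) htop1 htop2
    have hff' : f = f' := (ho f hfe).symm.trans (hff.trans (ho f' hfe'))
    subst hff'
    obtain ⟨hQQ, hRR⟩ := inj_same hst Q.1 Q'.1 R.1 R'.1 hb.1 hb'.1 hb.2.1 hb'.2.1 (by rw [hv])
    have hQ2 : Q = Q' := Subtype.ext hQQ
    have hR2 : R = R' := Subtype.ext hRR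
    subst hQ2
    subst hR2
    rfl
  · -- inl / inr : impossible
    exfalso
    have hmem := Finset.mem_filter.mp hf
    have hfe : f ∈ G.edgeSet := mem_edgeFinset.mp hmem.1
    have hadj : G.Adj (o f).1 (o f).2 := oriented_adj ho hfe
    have hfEq : w s((o f).1, (o f).2) = spDist G w (o f).1 s + w s(s, t) +
        spDist G w t (o f).2 + deltaG G w := by rw [ho f hfe]; exact hmem.2
    have hb := build_main hconn hw hunb hst hadj Q.1 R.1 Q.2.1 R.2.1 Q.2.2 R.2.2 hfEq
    have hmem' := Finset.mem_filter.mp hf'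
    have hfe' : f' ∈ G.edgeSet := mem_edgeFinset.mp hmem'.1
    have hadj' : G.Adj (o f').2 (o f').1 := (oriented_adj ho hfe').symm
    have hfEq' : w s((o f').2, (o f').1) = spDist G w (o f').2 s + w s(s, t) +
        spDist G w t (o f').1 + deltaG G w := by
      rw [Sym2.eq_swap, ho f' hfe']; exact hmem'.2
    have hb' := build_main hconn hw hunb hst hadj' Q'.1 R'.1 Q'.2.1 R'.2.1 Q'.2.2 R'.2.2 hfEq'
    have htop1 := hb.2.2.2.1
    have htop2 := hb'.2.2.2.1
    rw [hv] at htop1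
    have hff : s((o f).1, (o f).2) = s((o f').2, (o f').1) :=
      topUnique (cycPos hw hb'.2.2.1) htop1 htop2
    have hff' : f = f' := (ho f hfe).symm.trans (hff.trans (Sym2.eq_swap.trans (ho f' hfe')))
    subst hff'
    exact inj_cross hst Q.1 R.1 Q'.1 R'.1 hb.1 hb'.1 hb.2.1 hb'.2.1 hv
  · -- inr / inl : impossible
    exfalso
    have hmem := Finset.mem_filter.mp hf
    have hfe : f ∈ G.edgeSet := mem_edgeFinset.mp hmem.1
    have hadj : G.Adj (o f).2 (o f).1 := (oriented_adj ho hfe).symm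
    have hfEq : w s((o f).2, (o f).1) = spDist G w (o f).2 s + w s(s, t) +
        spDist G w t (o f).1 + deltaG G w := by
      rw [Sym2.eq_swap, ho f hfe]; exact hmem.2
    have hb := build_main hconn hw hunb hst hadj Q.1 R.1 Q.2.1 R.2.1 Q.2.2 R.2.2 hfEq
    have hmem' := Finset.mem_filter.mp hf'
    have hfe' : f' ∈ G.edgeSet := mem_edgeFinset.mp hmem'.1
    have hadj' : G.Adj (o f').1 (o f').2 := oriented_adj ho hfe'
    have hfEq' : w s((o f').1, (o f').2) = spDist G w (o f').1 s + w s(s, t) +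
        spDist G w t (o f').2 + deltaG G w := by rw [ho f' hfe']; exact hmem'.2
    have hb' := build_main hconn hw hunb hst hadj' Q'.1 R'.1 Q'.2.1 R'.2.1 Q'.2.2 R'.2.2 hfEq'
    have htop1 := hb.2.2.2.1
    have htop2 := hb'.2.2.2.1
    rw [hv] at htop1
    have hff : s((o f).2, (o f).1) = s((o f').1, (o f').2) :=
      topUnique (cycPos hw hb'.2.2.1) htop1 htop2
    have hff' : f = f' := (ho f hfe).symm.trans (Sym2.eq_swap.trans (hff.trans (ho f' hfe')))
    subst hff'
    exact inj_cross hst Q'.1 R'.1 Q.1 R.1 hb'.1 hb.1 hb'.2.1 hb.2.1 hv.symm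
  · -- inr / inr
    have hmem := Finset.mem_filter.mp hf
    have hfe : f ∈ G.edgeSet := mem_edgeFinset.mp hmem.1
    have hadj : G.Adj (o f).2 (o f).1 := (oriented_adj ho hfe).symm
    have hfEq : w s((o f).2, (o f).1) = spDist G w (o f).2 s + w s(s, t) +
        spDist G w t (o f).1 + deltaG G w := by
      rw [Sym2.eq_swap, ho f hfe]; exact hmem.2
    have hb := build_main hconn hw hunb hst hadj Q.1 R.1 Q.2.1 R.2.1 Q.2.2 R.2.2 hfEq
    have hmem' := Finset.mem_filter.mp hf'
    have hfe' : f' ∈ G.edgeSet := mem_edgeFinset.mp hmem'.1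
    have hadj' : G.Adj (o f').2 (o f').1 := (oriented_adj ho hfe').symm
    have hfEq' : w s((o f').2, (o f').1) = spDist G w (o f').2 s + w s(s, t) +
        spDist G w t (o f').1 + deltaG G w := by
      rw [Sym2.eq_swap, ho f' hfe']; exact hmem'.2
    have hb' := build_main hconn hw hunb hst hadj' Q'.1 R'.1 Q'.2.1 R'.2.1 Q'.2.2 R'.2.2 hfEq'
    have htop1 := hb.2.2.2.1
    have htop2 := hb'.2.2.2.1
    rw [hv] at htop1
    have hff : s((o f).2, (o f).1) = s((o f').2, (o f').1) :=
      topUnique (cycPos hw hb'.2.2.1) htop1 htop2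
    have hff' : f = f' :=
      (ho f hfe).symm.trans (Sym2.eq_swap.trans (hff.trans (Sym2.eq_swap.trans (ho f' hfe'))))
    subst hff'
    obtain ⟨hQQ, hRR⟩ := inj_same hst Q.1 Q'.1 R.1 R'.1 hb.1 hb'.1 hb.2.1 hb'.2.1 (by rw [hv])
    have hQ2 : Q = Q' := Subtype.ext hQQ
    have hR2 : R = R' := Subtype.ext hRR
    subst hQ2
    subst hR2
    rfl

lemma gmap_surjective (hconn : G.Connected) (hw : ∀ e ∈ G.edgeSet, 0 < w e)
    (hunb : ∃ c : Finset (Sym2 V), IsCycleSet G c ∧ UnbalancedSet w c)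
    (o : Sym2 V → V × V) (ho : ∀ e ∈ G.edgeSet, s((o e).1, (o e).2) = e)
    {s t : V} (hst : G.Adj s t) :
    Function.Surjective (gmap hconn hw hunb o ho hst) := by
  rintro ⟨c, hcyc, hunbc, hec, hnet, hdef⟩
  obtain ⟨ftop, htop⟩ := hunbc
  have hfe : ftop ∈ G.edgeSet := cycSubset hcyc ftop htop.1
  have hof := ho ftop hfe
  have hadj : G.Adj (o ftop).1 (o ftop).2 := oriented_adj ho hfe
  have htop' : TopOfSet w c s((o ftop).1, (o ftop).2) := by rwa [hof]
  rcases decomp_main hconn hw hunb hst hcyc hec hnet hdef hadj htop' with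
    ⟨Q, R, hQ, hR, hQs, hRs, hfeq, hins⟩ | ⟨Q, R, hQ, hR, hQs, hRs, hfeq, hins⟩
  · have hfX : ftop ∈ G.edgeFinset.filter (fun f => w f =
        spDist G w (o f).1 s + w s(s, t) + spDist G w t (o f).2 + deltaG G w) := by
      rw [Finset.mem_filter]
      refine ⟨mem_edgeFinset.mpr hfe, ?_⟩
      conv_lhs => rw [← hof]
      exact hfeq
    refine ⟨Sum.inl ⟨⟨ftop, hfX⟩, ⟨Q, hQ, hQs⟩, ⟨R, hR, hRs⟩⟩, ?_⟩
    apply Subtype.ext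
    exact hins
  · have hfY : ftop ∈ G.edgeFinset.filter (fun f => w f =
        spDist G w (o f).2 s + w s(s, t) + spDist G w t (o f).1 + deltaG G w) := by
      rw [Finset.mem_filter]
      refine ⟨mem_edgeFinset.mpr hfe, ?_⟩
      conv_lhs => rw [← hof, Sym2.eq_swap]
      exact hfeq
    refine ⟨Sum.inr ⟨⟨ftop, hfY⟩, ⟨Q, hQ, hQs⟩, ⟨R, hR, hRs⟩⟩, ?_⟩
    apply Subtype.ext
    exact hins

end MapAux

end MyAuxSection

/-- The counting formula for `N_U(e, δ(G))`: given an arbitrary orientation `o`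
of the edges, with
`X = { f=(α,β) ∈ E : w(f) = d(α,s) + w(e) + d(t,β) + δ(G) }` and
`Y = { f=(α,β) ∈ E : w(f) = d(β,s) + w(e) + d(t,α) + δ(G) }`,
`N_U(e, δ(G)) = Σ_{(α,β)∈X} csp(α,s)·csp(t,β) + Σ_{(α,β)∈Y} csp(β,s)·csp(t,α)`. -/
theorem stmt16 [Fintype V] [DecidableEq V] (G : SimpleGraph V) [DecidableRel G.Adj]
    (hconn : G.Connected) (w : Sym2 V → ℝ) (hw : ∀ e ∈ G.edgeSet, 0 < w e)
    (hunb : ∃ c : Finset (Sym2 V), IsCycleSet G c ∧ UnbalancedSet w c)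
    (o : Sym2 V → V × V) (ho : ∀ e ∈ G.edgeSet, s((o e).1, (o e).2) = e)
    (s t : V) (hst : G.Adj s t) :
    NU G w s(s, t) (deltaG G w) =
      (∑ f ∈ G.edgeFinset.filter (fun f => w f =
          spDist G w (o f).1 s + w s(s, t) + spDist G w t (o f).2 + deltaG G w),
        csp G w (o f).1 s * csp G w t (o f).2) +
      (∑ f ∈ G.edgeFinset.filter (fun f => w f =
          spDist G w (o f).2 s + w s(s, t) + spDist G w t (o f).1 + deltaG G w),
        csp G w (o f).2 s * csp G w t (o f).1) := by

  classical
  have hbij : Function.Bijective (gmap hconn hw hunb o ho hst) :=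
    ⟨gmap_injective hconn hw hunb o ho hst, gmap_surjective hconn hw hunb o ho hst⟩
  have hcard : Nat.card (Btype G w o s t) = Nat.card (Atype G w s t) :=
    Nat.card_eq_of_bijective _ hbij
  have hNU : NU G w s(s, t) (deltaG G w) = Nat.card (Atype G w s t) := rfl
  rw [hNU, ← hcard]
  haveI : ∀ u v : V, Fintype (SPt G w u v) := fun u v => Fintype.ofFinite _
  have h1 : Nat.card (Σ f : {f : Sym2 V // f ∈ G.edgeFinset.filter (fun f => w f =
        spDist G w (o f).1 s + w s(s, t) + spDist G w t (o f).2 + deltaG G w)},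
        SPt G w (o f.1).1 s × SPt G w t (o f.1).2)
      = ∑ f ∈ G.edgeFinset.filter (fun f => w f =
        spDist G w (o f).1 s + w s(s, t) + spDist G w t (o f).2 + deltaG G w),
        csp G w (o f).1 s * csp G w t (o f).2 := by
    rw [Nat.card_eq_fintype_card, Fintype.card_sigma]
    have hterm : ∀ f : {f : Sym2 V // f ∈ G.edgeFinset.filter (fun f => w f =
        spDist G w (o f).1 s + w s(s, t) + spDist G w t (o f).2 + deltaG G w)},
        Fintype.card (SPt G w (o f.1).1 s × SPt G w t (o f.1).2)
        = csp G w (o f.1).1 s * csp G w t (o f.1).2 := by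
      intro f
      rw [Fintype.card_prod, csp_eq_card, csp_eq_card,
        Nat.card_eq_fintype_card, Nat.card_eq_fintype_card]
    rw [← Finset.sum_coe_sort (G.edgeFinset.filter (fun f => w f =
        spDist G w (o f).1 s + w s(s, t) + spDist G w t (o f).2 + deltaG G w))
      (fun f => csp G w (o f).1 s * csp G w t (o f).2)]
    exact Finset.sum_congr rfl (fun f _ => hterm f)
  have h2 : Nat.card (Σ f : {f : Sym2 V // f ∈ G.edgeFinset.filter (fun f => w f =
        spDist G w (o f).2 s + w s(s, t) + spDist G w t (o f).1 + deltaG G w)},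
        SPt G w (o f.1).2 s × SPt G w t (o f.1).1)
      = ∑ f ∈ G.edgeFinset.filter (fun f => w f =
        spDist G w (o f).2 s + w s(s, t) + spDist G w t (o f).1 + deltaG G w),
        csp G w (o f).2 s * csp G w t (o f).1 := by
    rw [Nat.card_eq_fintype_card, Fintype.card_sigma]
    have hterm : ∀ f : {f : Sym2 V // f ∈ G.edgeFinset.filter (fun f => w f =
        spDist G w (o f).2 s + w s(s, t) + spDist G w t (o f).1 + deltaG G w)},
        Fintype.card (SPt G w (o f.1).2 s × SPt G w t (o f.1).1)
        = csp G w (o f.1).2 s * csp G w t (o f.1).1 := by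
      intro f
      rw [Fintype.card_prod, csp_eq_card, csp_eq_card,
        Nat.card_eq_fintype_card, Nat.card_eq_fintype_card]
    rw [← Finset.sum_coe_sort (G.edgeFinset.filter (fun f => w f =
        spDist G w (o f).2 s + w s(s, t) + spDist G w t (o f).1 + deltaG G w))
      (fun f => csp G w (o f).2 s * csp G w t (o f).1)]
    exact Finset.sum_congr rfl (fun f _ => hterm f)
  have hsplit : Nat.card (Btype G w o s t)
      = Nat.card (Σ f : {f : Sym2 V // f ∈ G.edgeFinset.filter (fun f => w f =
          spDist G w (o f).1 s + w s(s, t) + spDist G w t (o f).2 + deltaG G w)},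
          SPt G w (o f.1).1 s × SPt G w t (o f.1).2)
      + Nat.card (Σ f : {f : Sym2 V // f ∈ G.edgeFinset.filter (fun f => w f =
          spDist G w (o f).2 s + w s(s, t) + spDist G w t (o f).1 + deltaG G w)},
          SPt G w (o f.1).2 s × SPt G w t (o f.1).1) :=
    Nat.card_sum
  rw [hsplit, h1, h2]
end
end

section
/- Let G=(V,E) be a general dissimilarity graph. Then G contains an unbalanced cycle if and only if there exists an edge e=(s,t)∈E with w(e) > d(s,t); and if G contains an unbalanced cycle, then δ(G) = max_{e=(s,t)∈E} ( w(e) − d(s,t) ). -/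
open SimpleGraph

noncomputable section

variable {V : Type*}

section MyAux

variable {G : SimpleGraph V} {w : Sym2 V → ℝ}

lemma my_wlen_edge_le (hw : ∀ e ∈ G.edgeSet, 0 < w e) {u v : V} {p : G.Walk u v}
    {e : Sym2 V} (he : e ∈ p.edges) : w e ≤ wlen w p :=
  List.single_le_sum
    (fun x hx => by
      obtain ⟨f, hf, rfl⟩ := List.mem_map.mp hx
      exact (hw f (p.edges_subset_edgeSet hf)).le)
    _ (List.mem_map_of_mem (f := w) he)

lemma my_sum_toFinset [DecidableEq V] {u v : V} {p : G.Walk u v} (hp : p.edges.Nodup) :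
    ∑ f ∈ p.edges.toFinset, w f = wlen w p :=
  List.sum_toFinset w hp

lemma my_spSet_finite [Fintype V] (G : SimpleGraph V) (w : Sym2 V → ℝ) (u v : V) :
    {x : ℝ | ∃ p : G.Walk u v, p.IsPath ∧ wlen w p = x}.Finite := by
  classical
  haveI : G.LocallyFinite := fun _ => Fintype.ofFinite _
  haveI hfin : Finite {p : G.Walk u v // p.IsPath} :=
    Finite.of_injective
      (fun p => (⟨p.1, p.2, p.2.length_lt⟩ :
        {p : G.Walk u v // p.IsPath ∧ p.length < Fintype.card V}))
      (fun a b hab => Subtype.ext (by simpa using congrArg Subtype.val hab))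
  have hset : {x : ℝ | ∃ p : G.Walk u v, p.IsPath ∧ wlen w p = x}
      = Set.range (fun p : {p : G.Walk u v // p.IsPath} => wlen w p.1) := by
    ext x
    constructor
    · rintro ⟨p, hp, rfl⟩; exact ⟨⟨p, hp⟩, rfl⟩
    · rintro ⟨⟨p, hp⟩, rfl⟩; exact ⟨p, hp, rfl⟩
  rw [hset]
  exact Set.finite_range _

lemma my_spDist_exists [Fintype V] [DecidableEq V] (hconn : G.Connected) (u v : V) :
    ∃ p : G.Walk u v, p.IsPath ∧ wlen w p = spDist G w u v := by
  have hne : {x : ℝ | ∃ p : G.Walk u v, p.IsPath ∧ wlen w p = x}.Nonempty := by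
    obtain ⟨q⟩ := hconn u v
    exact ⟨wlen w (q.toPath : G.Walk u v), (q.toPath : G.Walk u v), q.toPath.2, rfl⟩
  have := hne.csInf_mem (my_spSet_finite G w u v)
  exact this

lemma my_spDist_le [Fintype V] {u v : V} (p : G.Walk u v) (hp : p.IsPath) :
    spDist G w u v ≤ wlen w p :=
  csInf_le (my_spSet_finite G w u v).bddBelow ⟨p, hp, rfl⟩

/-- Splitting a cycle at any of its edges. -/
lemma my_cycle_split [DecidableEq V] {v : V} {p : G.Walk v v} (hp : p.IsCycle)
    {e : Sym2 V} (he : e ∈ p.edges) :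
    ∃ (a b : V) (h : G.Adj a b) (q : G.Walk b a), q.IsPath ∧ e = s(a, b) ∧
      s(a, b) ∉ q.edges ∧ ((Walk.cons h q).edges).Perm p.edges := by
  obtain ⟨d, hd, rfl⟩ := List.mem_map.mp he
  have hfst : d.fst ∈ p.support := Walk.dart_fst_mem_support_of_mem_darts _ hd
  have hc' : (p.rotate _ hfst).IsCycle := hp.rotate hfst
  have hdarts := p.rotate_darts _ hfst
  have hd' : d ∈ (p.rotate _ hfst).darts := hdarts.perm.mem_iff.mpr hd
  obtain ⟨b, hadj, q, hq⟩ := Walk.not_nil_iff.mp hc'.not_nil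
  rw [hq] at hc' hd'
  rw [Walk.cons_isCycle_iff] at hc'
  obtain ⟨hqpath, hqe⟩ := hc'
  have hdd : d = ⟨(d.fst, b), hadj⟩ := by
    rcases List.mem_cons.mp (by simpa using hd') with h1 | h1
    · exact h1
    · exfalso
      have h2 : d.fst ∈ q.darts.map (·.fst) := List.mem_map_of_mem h1
      rw [Walk.map_fst_darts] at h2
      have h3 : q.support.reverse = d.fst :: q.support.reverse.tail := by
        rw [← Walk.support_reverse]
        exact q.reverse.support_eq_cons
      have h4 : q.support.reverse.Nodup := List.nodup_reverse.mpr hqpath.support_nodup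
      rw [h3] at h4
      have h5 : d.fst ∈ q.support.reverse.tail := by
        rw [List.tail_reverse]
        exact List.mem_reverse.mpr h2
      exact (List.nodup_cons.mp h4).1 h5
  refine ⟨d.fst, b, hadj, q, hqpath, ?_, hqe, ?_⟩
  · rw [hdd]; rfl
  · rw [← hq]
    exact (p.rotate_edges _ hfst).perm

/-- From an edge of a cycle-set, extract a path between its endpoints whose
length is the sum of weights of the other edges of the cycle. -/
lemma my_cycleSet_path [Fintype V] [DecidableEq V] {c : Finset (Sym2 V)}
    (hc : IsCycleSet G c) {e : Sym2 V} (he : e ∈ c) :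
    ∃ a b : V, G.Adj a b ∧ e = s(a, b) ∧ spDist G w a b ≤ ∑ f ∈ c.erase e, w f := by
  obtain ⟨v, p, hp, rfl⟩ := hc
  obtain ⟨a, b, h, q, hqpath, rfl, hqe, hperm⟩ :=
    my_cycle_split hp (List.mem_toFinset.mp he)
  refine ⟨b, a, h.symm, Sym2.eq_swap.symm, ?_⟩
  have htf : p.edges.toFinset = insert s(a, b) q.edges.toFinset := by
    ext x
    rw [List.mem_toFinset, ← hperm.mem_iff]
    simp
  rw [htf, Finset.erase_insert (by simpa using hqe)]
  rw [my_sum_toFinset hqpath.edges_nodup]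
  exact my_spDist_le q hqpath

/-- Constructing an unbalanced cycle from a short edge. -/
lemma my_build_cycle [Fintype V] [DecidableEq V]
    (hw : ∀ e ∈ G.edgeSet, 0 < w e) (hconn : G.Connected) {u v : V} (h : G.Adj u v)
    (hlt : spDist G w u v < w s(u, v)) :
    ∃ c : Finset (Sym2 V), IsCycleSet G c ∧ s(u, v) ∈ c ∧
      (∑ f ∈ c.erase s(u, v), w f) = spDist G w u v ∧
      (∀ f ∈ c, w f ≤ w s(u, v)) := by
  obtain ⟨p, hp, hlen⟩ := my_spDist_exists (w := w) hconn u v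
  have hnotin : s(u, v) ∉ p.edges := by
    intro hmem
    exact absurd (hlen ▸ my_wlen_edge_le hw hmem) (not_le.mpr hlt)
  have hcyc : (Walk.cons h.symm p).IsCycle := by
    rw [Walk.cons_isCycle_iff]
    exact ⟨hp, by rwa [Sym2.eq_swap]⟩
  refine ⟨(Walk.cons h.symm p).edges.toFinset, ⟨v, _, hcyc, rfl⟩, ?_, ?_, ?_⟩
  · simp [Sym2.eq_swap]
  · have htf : (Walk.cons h.symm p).edges.toFinset = insert s(u, v) p.edges.toFinset := by
      simp [Sym2.eq_swap]
    rw [htf, Finset.erase_insert (by simpa using hnotin)]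
    rw [my_sum_toFinset hp.edges_nodup, hlen]
  · intro f hf
    rw [List.mem_toFinset, Walk.edges_cons, List.mem_cons] at hf
    rcases hf with rfl | hf
    · rw [Sym2.eq_swap]
    · exact (my_wlen_edge_le hw hf).trans (by rw [hlen]; exact hlt.le)

/-- The `sSup` in `deficitSet` is a maximum weight. -/
lemma my_sSup_image {c : Finset (Sym2 V)} (hne : c.Nonempty) :
    ∃ e ∈ c, w e = sSup (w '' (c : Set (Sym2 V))) ∧ ∀ f ∈ c, w f ≤ w e := by
  have hfin : (w '' (c : Set (Sym2 V))).Finite := (c.finite_toSet).image w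
  have hne' : (w '' (c : Set (Sym2 V))).Nonempty := (hne.to_set).image w
  obtain ⟨e, hec, hew⟩ := hne'.csSup_mem hfin
  exact ⟨e, hec, hew, fun f hf => hew ▸ le_csSup hfin.bddAbove ⟨f, hf, rfl⟩⟩

end MyAux

/-- `G` contains an unbalanced cycle iff some edge `e = (s,t)` has
`w(e) > d(s,t)`; and in that case `δ(G) = max_{e=(s,t) ∈ E} (w(e) − d(s,t))`. -/
theorem stmt17 [Fintype V] [DecidableEq V] (G : SimpleGraph V)
    (hconn : G.Connected) (w : Sym2 V → ℝ) (hw : ∀ e ∈ G.edgeSet, 0 < w e) :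
    ((∃ c : Finset (Sym2 V), IsCycleSet G c ∧ UnbalancedSet w c) ↔
      ∃ u v : V, G.Adj u v ∧ spDist G w u v < w s(u, v)) ∧
    ((∃ c : Finset (Sym2 V), IsCycleSet G c ∧ UnbalancedSet w c) →
      deltaG G w =
        sSup {x : ℝ | ∃ u v : V, G.Adj u v ∧ x = w s(u, v) - spDist G w u v}) := by
  classical
  have hfwd : (∃ c : Finset (Sym2 V), IsCycleSet G c ∧ UnbalancedSet w c) →
      ∃ u v : V, G.Adj u v ∧ spDist G w u v < w s(u, v) := by
    rintro ⟨c, hc, e, hec, htop⟩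
    obtain ⟨a, b, hab, rfl, hle⟩ := my_cycleSet_path (w := w) hc hec
    exact ⟨a, b, hab, lt_of_le_of_lt hle htop⟩
  have hbwd : (∃ u v : V, G.Adj u v ∧ spDist G w u v < w s(u, v)) →
      ∃ c : Finset (Sym2 V), IsCycleSet G c ∧ UnbalancedSet w c := by
    rintro ⟨u, v, h, hlt⟩
    obtain ⟨c, hc, hmem, hsum, _⟩ := my_build_cycle hw hconn h hlt
    exact ⟨c, hc, s(u, v), hmem, by rw [hsum]; exact hlt⟩
  refine ⟨⟨hfwd, hbwd⟩, ?_⟩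
  intro hex
  obtain ⟨u0, v0, h0, hlt0⟩ := hfwd hex
  obtain ⟨c0, hc0, e0, he0, htop0⟩ := hex
  set A := {x : ℝ | ∃ c : Finset (Sym2 V), IsCycleSet G c ∧ deficitSet w c = x} with hA
  set B := {x : ℝ | ∃ u v : V, G.Adj u v ∧ x = w s(u, v) - spDist G w u v} with hB
  have hAfin : A.Finite :=
    (Set.finite_range (deficitSet w)).subset (by rintro x ⟨c, _, rfl⟩; exact ⟨c, rfl⟩)
  have hBfin : B.Finite :=
    (Set.finite_range (fun p : V × V => w s(p.1, p.2) - spDist G w p.1 p.2)).subset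
      (by rintro x ⟨u, v, _, rfl⟩; exact ⟨(u, v), rfl⟩)
  have hAne : A.Nonempty := ⟨deficitSet w c0, c0, hc0, rfl⟩
  have hBne : B.Nonempty := ⟨w s(u0, v0) - spDist G w u0 v0, u0, v0, h0, rfl⟩
  have hAB : ∀ x ∈ A, x ≤ sSup B := by
    rintro x ⟨c, hc, rfl⟩
    have hc' := hc
    obtain ⟨v, p, hp, rfl⟩ := hc
    have hne : p.edges.toFinset.Nonempty := by
      have h3 : p.edges ≠ [] := by
        have h4 := hp.three_le_length
        intro hnil
        rw [← Walk.length_edges, hnil] at h4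
        simp at h4
      obtain ⟨f, hf⟩ := List.exists_mem_of_ne_nil _ h3
      exact ⟨f, List.mem_toFinset.mpr hf⟩
    obtain ⟨e, hec, hesup, hemax⟩ := my_sSup_image (w := w) hne
    obtain ⟨a, b, hab, rfl, hle⟩ := my_cycleSet_path (w := w) hc' hec
    have hsum : ∑ f ∈ p.edges.toFinset, w f
        = w s(a, b) + ∑ f ∈ p.edges.toFinset.erase s(a, b), w f :=
      (Finset.add_sum_erase _ w hec).symm
    have hstep : deficitSet w p.edges.toFinset ≤ w s(a, b) - spDist G w a b := by
      rw [deficitSet, ← hesup, hsum]; linarith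
    exact hstep.trans (le_csSup hBfin.bddAbove ⟨a, b, hab, rfl⟩)
  have hBA : ∀ x ∈ B, x ≤ sSup A := by
    rintro x ⟨u, v, h, rfl⟩
    by_cases hcase : spDist G w u v < w s(u, v)
    · obtain ⟨c, hc, hmem, hsum, hmax⟩ := my_build_cycle hw hconn h hcase
      have hcne : c.Nonempty := ⟨_, hmem⟩
      obtain ⟨e, hec, hesup, hemax⟩ := my_sSup_image (w := w) hcne
      have heq : sSup (w '' (c : Set (Sym2 V))) = w s(u, v) :=
        le_antisymm (hesup ▸ hmax e hec) (hesup ▸ hemax _ hmem)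
      have hdef : deficitSet w c = w s(u, v) - spDist G w u v := by
        rw [deficitSet, heq, ← Finset.add_sum_erase _ w hmem, hsum]; ring
      exact le_csSup hAfin.bddAbove ⟨c, hc, hdef⟩
    · have h1 : w s(u, v) - spDist G w u v ≤ 0 := by
        have := not_lt.mp hcase; linarith
      have hc0ne : c0.Nonempty := ⟨e0, he0⟩
      obtain ⟨e, hec, hesup, hemax⟩ := my_sSup_image (w := w) hc0ne
      have h2 : 0 < deficitSet w c0 := by
        have h3 : w e0 ≤ sSup (w '' (c0 : Set (Sym2 V))) := hesup ▸ hemax _ he0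
        have h4 := (Finset.add_sum_erase _ w he0).symm
        rw [deficitSet]
        linarith
      calc w s(u, v) - spDist G w u v ≤ 0 := h1
        _ ≤ deficitSet w c0 := h2.le
        _ ≤ sSup A := le_csSup hAfin.bddAbove ⟨c0, hc0, rfl⟩
  show sSup A = sSup B
  exact le_antisymm (csSup_le hAne hAB) (csSup_le hBne hBA)
end
end

section
/- Let G=(V,E) be a general dissimilarity graph and let C be a cycle of G with δ(C) = δ(G) > 0 and top edge t=(α,β). Then the path C∖t obtained from C by removing its top edge is a shortest path between α and β; that is, the sum of the weights of the non-top edges of C equals d(α,β). -/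
open SimpleGraph

noncomputable section

variable {V : Type*}

open SimpleGraph in
/-- In a path ending at `v`, any edge containing `v` is the last edge. -/
lemma path_last_edge {G : SimpleGraph V} {x v b : V} (r : G.Walk x v) (hr : r.IsPath)
    (he : s(v, b) ∈ r.edges) :
    ∃ (h : G.Adj b v) (r' : G.Walk x b), r = r'.concat h := by
  induction r with
  | nil => simp at he
  | @cons x y _ h' r'' ih =>
    rw [Walk.edges_cons, List.mem_cons] at he
    rcases he with he | he
    · rw [Sym2.eq_iff] at he
      rcases he with ⟨hv, hb⟩ | ⟨hv, hb⟩
      · exfalso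
        have hx : x ∉ r''.support := ((Walk.cons_isPath_iff h' r'').mp hr).2
        exact hx (hv ▸ r''.end_mem_support)
      · subst hb
        subst hv
        obtain rfl := (Walk.isPath_iff_eq_nil (p := r'')).mp ((Walk.cons_isPath_iff h' r'').mp hr).1
        exact ⟨h', Walk.nil, (Walk.concat_nil h').symm⟩
    · obtain ⟨h, r', rfl⟩ := ih ((Walk.cons_isPath_iff h' r'').mp hr).1 he
      exact ⟨h, Walk.cons h' r', (Walk.concat_cons h' r' h).symm⟩

open SimpleGraph in
/-- Removing an edge `s(a,b)` from a cycle based at `a` leaves a path from `b` to `a`. -/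
lemma cycle_split {G : SimpleGraph V} {a b : V} (q : G.Walk a a) (hq : q.IsCycle)
    (he : s(a, b) ∈ q.edges) :
    ∃ r : G.Walk b a, r.IsPath ∧ q.edges.Perm (s(a, b) :: r.edges) := by
  have hnil : ¬ q.Nil := fun h => hq.ne_nil h.eq_nil
  obtain ⟨x, h', q', rfl⟩ := Walk.not_nil_iff.mp hnil
  obtain ⟨hpath, hnotmem⟩ := (Walk.cons_isCycle_iff q' h').mp hq
  rw [Walk.edges_cons, List.mem_cons] at he
  rcases he with he | he
  · rw [Sym2.eq_iff] at he
    rcases he with ⟨-, hb⟩ | ⟨hax, hb⟩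
    · subst hb
      exact ⟨q', hpath, by rw [Walk.edges_cons]⟩
    · exact absurd h' (hax ▸ G.irrefl)
  · obtain ⟨h2, r', rfl⟩ := path_last_edge q' hpath he
    have hq2 : Walk.cons h' (r'.concat h2) = (Walk.cons h' r').concat h2 :=
      (Walk.concat_cons h' r' h2).symm
    have hs : (Walk.cons h' (r'.concat h2)).support.tail = r'.support ++ [a] := by
      rw [hq2, Walk.support_concat, Walk.support_cons, List.cons_append,
        List.tail_cons]
    have hnd : (r'.support ++ [a]).Nodup := hs ▸ hq.support_nodup
    have hr0 : (Walk.cons h' r').IsPath := by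
      rw [Walk.isPath_def, Walk.support_cons, List.nodup_cons]
      have := List.nodup_append'.mp hnd
      exact ⟨fun ha => this.2.2 ha (List.mem_singleton_self a), this.1⟩
    refine ⟨(Walk.cons h' r').reverse, hr0.reverse, ?_⟩
    have hedge : (Walk.cons h' (r'.concat h2)).edges
        = (Walk.cons h' r').edges ++ [s(b, a)] := by
      rw [hq2, Walk.edges_concat, List.concat_eq_append]
    rw [hedge, Walk.edges_reverse]
    refine (List.perm_append_singleton _ _).trans ?_
    rw [show s(b, a) = s(a, b) from Sym2.eq_swap]
    exact List.Perm.cons _ (List.reverse_perm _).symm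

/-- The deficit of a cycle whose maximum weight is attained at `t`. -/
lemma deficit_of_top [DecidableEq V] (w : Sym2 V → ℝ) (c : Finset (Sym2 V)) (t : Sym2 V)
    (ht : t ∈ c) (hmax : ∀ f ∈ c, w f ≤ w t) :
    deficitSet w c = w t - ∑ f ∈ c.erase t, w f := by
  have hbdd : BddAbove (w '' (c : Set (Sym2 V))) := (c.finite_toSet.image w).bddAbove
  have hsup : sSup (w '' (c : Set (Sym2 V))) = w t := by
    apply le_antisymm
    · apply csSup_le ⟨w t, Set.mem_image_of_mem w (by simpa using ht)⟩
      rintro x ⟨f, hf, rfl⟩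
      exact hmax f (by simpa using hf)
    · exact le_csSup hbdd (Set.mem_image_of_mem w (by simpa using ht))
  have hsum : w t + ∑ f ∈ c.erase t, w f = ∑ f ∈ c, w f := Finset.add_sum_erase c w ht
  rw [deficitSet, hsup, ← hsum]
  ring


/-- If `C` is a cycle with `δ(C) = δ(G) > 0` and top edge `t = (α,β)`, then the
path `C ∖ t` is a shortest path between `α` and `β`: the sum of the weights of
the non-top edges of `C` equals `d(α,β)`. -/
theorem stmt18 [Fintype V] [DecidableEq V] (G : SimpleGraph V)
    (hconn : G.Connected) (w : Sym2 V → ℝ) (hw : ∀ e ∈ G.edgeSet, 0 < w e)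
    (c : Finset (Sym2 V)) (hc : IsCycleSet G c)
    (a b : V) (htop : TopOfSet w c s(a, b))
    (hdef : deficitSet w c = deltaG G w) (hpos : 0 < deltaG G w) :
    ∑ f ∈ c.erase s(a, b), w f = spDist G w a b := by
  classical
  obtain ⟨v, p, hp, hpc⟩ := hc
  have htc : s(a, b) ∈ c := htop.1
  have hpe : s(a, b) ∈ p.edges := by
    rw [← hpc] at htc; exact List.mem_toFinset.mp htc
  have ha : a ∈ p.support := p.fst_mem_support_of_mem_edges hpe
  have hq : (p.rotate a ha).IsCycle := hp.rotate ha
  have hqe : (p.rotate a ha).edges.Perm p.edges := (p.rotate_edges a ha).perm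
  have hqc : (p.rotate a ha).edges.toFinset = c := by rw [List.toFinset_eq_of_perm _ _ hqe, hpc]
  obtain ⟨r, hr, hperm⟩ := cycle_split (p.rotate a ha) hq (hqe.mem_iff.mpr hpe)
  have hnd : (s(a, b) :: r.edges).Nodup := hperm.nodup_iff.mp hq.edges_nodup
  have hnotin : s(a, b) ∉ r.edges := (List.nodup_cons.mp hnd).1
  have hrnd : r.edges.Nodup := (List.nodup_cons.mp hnd).2
  have hcins : c = insert s(a, b) r.edges.toFinset := by
    rw [← hqc, List.toFinset_eq_of_perm _ _ hperm, List.toFinset_cons]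
  have herase : c.erase s(a, b) = r.edges.toFinset := by
    rw [hcins, Finset.erase_insert (by simpa using hnotin)]
  set L := ∑ f ∈ c.erase s(a, b), w f with hL
  have hLr : L = wlen w r := by
    rw [hL, herase, wlen]; exact List.sum_toFinset w hrnd
  have hcsub : ∀ f ∈ c, f ∈ G.edgeSet := by
    intro f hf; rw [← hpc] at hf
    exact p.edges_subset_edgeSet (List.mem_toFinset.mp hf)
  have hadj : G.Adj a b := hcsub _ htc
  have hLpos : ∀ f ∈ c.erase s(a, b), 0 < w f := fun f hf =>
    hw f (hcsub f (Finset.mem_of_mem_erase hf))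
  have htw : L < w s(a, b) := htop.2
  have hdc : deficitSet w c = w s(a, b) - L := by
    apply deficit_of_top w c _ htc
    intro f hf
    by_cases hfe : f = s(a, b)
    · rw [hfe]
    · have h1 : w f ≤ L := Finset.single_le_sum (f := w)
        (fun g hg => (hLpos g hg).le) (Finset.mem_erase.mpr ⟨hfe, hf⟩)
      linarith
  have hbdd : BddAbove {x : ℝ | ∃ c : Finset (Sym2 V), IsCycleSet G c ∧ deficitSet w c = x} := by
    apply Set.Finite.bddAbove
    apply (Set.finite_range (deficitSet w)).subset
    rintro x ⟨c, -, rfl⟩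
    exact ⟨c, rfl⟩
  have hkey : ∀ Q : G.Walk a b, Q.IsPath → L ≤ wlen w Q := by
    intro Q hQ
    by_contra hlt
    push_neg at hlt
    have hQpos : ∀ x ∈ Q.edges.map w, 0 ≤ x := by
      intro x hx
      obtain ⟨f, hf, rfl⟩ := List.mem_map.mp hx
      exact (hw f (Q.edges_subset_edgeSet hf)).le
    have hQmem : ∀ f ∈ Q.edges, w f ≤ wlen w Q := fun f hf =>
      List.single_le_sum hQpos _ (List.mem_map_of_mem (f := w) hf)
    by_cases ht : s(a, b) ∈ Q.edges
    · have := hQmem _ ht; linarith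
    · have hrev : s(a, b) ∉ Q.reverse.edges := by
        rw [Walk.edges_reverse, List.mem_reverse]; exact ht
      have hcyc : (Walk.cons hadj Q.reverse).IsCycle :=
        (Walk.cons_isCycle_iff Q.reverse hadj).mpr ⟨hQ.reverse, hrev⟩
      have hc'cyc : IsCycleSet G ((Walk.cons hadj Q.reverse).edges.toFinset) :=
        ⟨a, _, hcyc, rfl⟩
      have hc'eq : (Walk.cons hadj Q.reverse).edges.toFinset
          = insert s(a, b) Q.edges.toFinset := by
        rw [Walk.edges_cons, List.toFinset_cons, Walk.edges_reverse, List.toFinset_reverse]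
      have hnotin' : s(a, b) ∉ Q.edges.toFinset := by simpa using ht
      have hQlen : ∑ f ∈ Q.edges.toFinset, w f = wlen w Q :=
        List.sum_toFinset w hQ.edges_nodup
      have hd' : deficitSet w (Walk.cons hadj Q.reverse).edges.toFinset
          = w s(a, b) - wlen w Q := by
        rw [deficit_of_top w _ s(a, b) (by rw [hc'eq]; exact Finset.mem_insert_self _ _)]
        · rw [hc'eq, Finset.erase_insert hnotin', hQlen]
        · intro f hf
          rw [hc'eq, Finset.mem_insert] at hf
          rcases hf with rfl | hf
          · exact le_refl _
          · have := hQmem f (List.mem_toFinset.mp hf)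
            linarith
      have hle : deficitSet w (Walk.cons hadj Q.reverse).edges.toFinset ≤ deltaG G w :=
        le_csSup hbdd ⟨_, hc'cyc, rfl⟩
      rw [hd', ← hdef, hdc] at hle
      linarith
  have hmem : L ∈ {x : ℝ | ∃ Q : G.Walk a b, Q.IsPath ∧ wlen w Q = x} := by
    refine ⟨r.reverse, hr.reverse, ?_⟩
    rw [wlen, Walk.edges_reverse, List.map_reverse, List.sum_reverse, ← wlen, ← hLr]
  have hlb : ∀ x ∈ {x : ℝ | ∃ Q : G.Walk a b, Q.IsPath ∧ wlen w Q = x}, L ≤ x := by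
    rintro x ⟨Q, hQ, rfl⟩
    exact hkey Q hQ
  rw [spDist]
  exact le_antisymm (le_csInf ⟨L, hmem⟩ hlb) (csInf_le ⟨L, hlb⟩ hmem)
end
end
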